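/- Let F_q be a finite field with q elements and let V be an n-dimensional vector space over F_q with n ≥ 2. If W is a subspace of V with dim W = k and 1 ≤ k ≤ n − 1, then the degree of W as a vertex of In(V) equals ∑_{i=1}^{k−1} [k choose i]_q + ∑_{i=1}^{n−k−1} [n−k choose i]_q, where [m choose i]_q = ((q^m − 1)(q^{m−1} − 1)⋯(q^{m−i+1} − 1)) / ((q^i − 1)(q^{i−1} − 1)⋯(q − 1)) is the Gaussian binomial coefficient counting i-dimensional subspaces of an m-dimensional space over F_q. -/

import Mathlib

/-- The vertex type of the subspace inclusion graph: nontrivial proper subspaces. -/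
abbrev InVert (F V : Type*) [Field F] [AddCommGroup V] [Module F V] :=
  {W : Submodule F V // W ≠ ⊥ ∧ W ≠ ⊤}

/-- The subspace inclusion graph `In(V)`: vertices are the nontrivial proper subspaces
of `V`, two of them being adjacent iff one is properly contained in the other. -/
def inclGraph (F V : Type*) [Field F] [AddCommGroup V] [Module F V] :
    SimpleGraph (InVert F V) where
  Adj W₁ W₂ := W₁.1 < W₂.1 ∨ W₂.1 < W₁.1
  symm := ⟨fun _ _ h => h.symm⟩
  loopless := ⟨fun _ h => Or.elim h (lt_irrefl _) (lt_irrefl _)⟩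

/-- The degree of a subspace `W` as a vertex of `In(V)`: the number of nontrivial
proper subspaces comparable with (hence adjacent to) `W`. -/
noncomputable def inDegree (F : Type*) {V : Type*} [Field F] [AddCommGroup V] [Module F V]
    (W : Submodule F V) : ℕ :=
  Nat.card {U : Submodule F V // (U ≠ ⊥ ∧ U ≠ ⊤) ∧ (U < W ∨ W < U)}

/-- The Gaussian binomial coefficient
`[m choose i]_q = ((q^m − 1)(q^{m−1} − 1)⋯(q^{m−i+1} − 1)) / ((q^i − 1)⋯(q − 1))`. -/
noncomputable def gaussBinom (q m i : ℕ) : ℚ :=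
  (∏ j ∈ Finset.range i, ((q : ℚ) ^ (m - j) - 1)) /
    (∏ j ∈ Finset.range i, ((q : ℚ) ^ (j + 1) - 1))

open Module Finset

section Counting

variable {F V : Type*} [Field F] [Fintype F] [AddCommGroup V] [Module F V]
  [FiniteDimensional F V]

attribute [local instance] Fintype.ofFinite

lemma myFinSub : Finite (Submodule F V) := by
  have : Finite V := Module.finite_of_finite F
  exact Finite.of_injective (fun U : Submodule F V => (U : Set V)) SetLike.coe_injective

/-- fibers of the span map -/
noncomputable def fiberEquiv (i : ℕ) (U : {U : Submodule F V // finrank F U = i}) :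
    {s : {s : Fin i → V // LinearIndependent F s} //
        (⟨Submodule.span F (Set.range s.1), by
          rw [finrank_span_eq_card s.2, Fintype.card_fin]⟩ :
          {U : Submodule F V // finrank F U = i}) = U} ≃
      {t : Fin i → U.1 // LinearIndependent F t} where
  toFun s := ⟨fun j => ⟨s.1.1 j,
      (congrArg Subtype.val s.2 : _ = U.1) ▸ Submodule.subset_span ⟨j, rfl⟩⟩, by
    exact LinearIndependent.of_comp U.1.subtype s.1.2⟩
  invFun t := ⟨⟨U.1.subtype ∘ t.1, t.2.map' U.1.subtype (Submodule.ker_subtype U.1)⟩, by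
    apply Subtype.ext
    have hle : Submodule.span F (Set.range (U.1.subtype ∘ t.1)) ≤ U.1 := by
      rw [Submodule.span_le]
      rintro x ⟨j, rfl⟩; exact (t.1 j).2
    refine Submodule.eq_of_le_of_finrank_le hle ?_
    rw [finrank_span_eq_card (t.2.map' U.1.subtype (Submodule.ker_subtype U.1)),
      Fintype.card_fin, U.2]⟩
  left_inv s := Subtype.ext (Subtype.ext rfl)
  right_inv t := Subtype.ext (funext fun j => Subtype.ext rfl)

lemma card_mul_aux (i : ℕ) (hi : i ≤ finrank F V) :
    Nat.card {U : Submodule F V // finrank F U = i} *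
        ∏ j ∈ range i, (Fintype.card F ^ i - Fintype.card F ^ j) =
      ∏ j ∈ range i, (Fintype.card F ^ finrank F V - Fintype.card F ^ j) := by
  have : Finite V := Module.finite_of_finite F
  have : Finite (Submodule F V) := myFinSub
  have hLI := card_linearIndependent (K := F) (V := V) (k := i) hi
  rw [Fin.prod_univ_eq_prod_range
      (fun j => Fintype.card F ^ finrank F V - Fintype.card F ^ j) i] at hLI
  rw [← hLI]
  set f : {s : Fin i → V // LinearIndependent F s} → {U : Submodule F V // finrank F U = i} :=
    fun s => ⟨Submodule.span F (Set.range s.1), by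
      rw [finrank_span_eq_card s.2, Fintype.card_fin]⟩ with hf
  rw [Nat.card_congr (Equiv.sigmaFiberEquiv f).symm]
  have hsig : Nat.card ((y : {U : Submodule F V // finrank F U = i}) × {x // f x = y}) =
      ∑ y : {U : Submodule F V // finrank F U = i}, Nat.card {x // f x = y} := by
    rw [Nat.card_eq_fintype_card, Fintype.card_sigma]
    exact Finset.sum_congr rfl fun y _ => (Nat.card_eq_fintype_card).symm
  rw [hsig]
  have hfib : ∀ U : {U : Submodule F V // finrank F U = i},
      Nat.card {s // f s = U} = ∏ j ∈ range i, (Fintype.card F ^ i - Fintype.card F ^ j) := by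
    intro U
    rw [Nat.card_congr (fiberEquiv i U)]
    have h2 := card_linearIndependent (K := F) (V := U.1) (k := i) (le_of_eq U.2.symm)
    rw [U.2, Fin.prod_univ_eq_prod_range
      (fun j => Fintype.card F ^ i - Fintype.card F ^ j) i] at h2
    exact h2
  rw [Finset.sum_congr rfl (fun U _ => hfib U), Finset.sum_const, smul_eq_mul,
    Nat.card_eq_fintype_card, Finset.card_univ]

lemma card_dim_eq_gauss (q m i : ℕ) (hq : Fintype.card F = q) (hm : finrank F V = m)
    (hi : i ≤ m) :
    (Nat.card {U : Submodule F V // finrank F U = i} : ℚ) = gaussBinom q m i := by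
  have hq2 : 1 < q := hq ▸ Fintype.one_lt_card
  have hq1 : (1 : ℚ) < (q : ℚ) := by exact_mod_cast hq2
  have hq0 : (0 : ℚ) < (q : ℚ) := lt_trans one_pos hq1
  have key := card_mul_aux (F := F) (V := V) i (hm ▸ hi)
  rw [hq, hm] at key
  -- cast key to ℚ
  have castprod : ∀ r : ℕ, i ≤ r → ((∏ j ∈ range i, (q ^ r - q ^ j) : ℕ) : ℚ) =
      ∏ j ∈ range i, ((q : ℚ) ^ j * ((q : ℚ) ^ (r - j) - 1)) := by
    intro r hr
    rw [Nat.cast_prod]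
    refine Finset.prod_congr rfl fun j hj => ?_
    have hji : j < i := mem_range.mp hj
    have hle : q ^ j ≤ q ^ r := Nat.pow_le_pow_right (le_of_lt hq2) (le_trans hji.le hr)
    rw [Nat.cast_sub hle]
    have : (q : ℚ) ^ j * (q : ℚ) ^ (r - j) = (q : ℚ) ^ r := by
      rw [← pow_add]
      congr 1
      omega
    push_cast
    rw [mul_sub, this, mul_one]
  have keyQ : (Nat.card {U : Submodule F V // finrank F U = i} : ℚ) *
      ((∏ j ∈ range i, (q : ℚ) ^ j) * ∏ j ∈ range i, ((q : ℚ) ^ (i - j) - 1)) =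
      (∏ j ∈ range i, (q : ℚ) ^ j) * ∏ j ∈ range i, ((q : ℚ) ^ (m - j) - 1) := by
    have := congrArg (Nat.cast : ℕ → ℚ) key
    rw [Nat.cast_mul, castprod i le_rfl, castprod m hi, Finset.prod_mul_distrib,
      Finset.prod_mul_distrib] at this
    exact this
  have hQ0 : (∏ j ∈ range i, (q : ℚ) ^ j) ≠ 0 :=
    Finset.prod_ne_zero_iff.mpr fun j _ => pow_ne_zero _ (ne_of_gt hq0)
  have hrefl : ∏ j ∈ range i, ((q : ℚ) ^ (i - j) - 1) =
      ∏ j ∈ range i, ((q : ℚ) ^ (j + 1) - 1) := by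
    rw [← Finset.prod_range_reflect (fun j => (q : ℚ) ^ (j + 1) - 1) i]
    refine Finset.prod_congr rfl fun j hj => ?_
    have hji : j < i := mem_range.mp hj
    congr 2
    omega
  have hB0 : (∏ j ∈ range i, ((q : ℚ) ^ (j + 1) - 1)) ≠ 0 := by
    refine Finset.prod_ne_zero_iff.mpr fun j _ => ?_
    have : (1 : ℚ) < (q : ℚ) ^ (j + 1) := one_lt_pow₀ hq1 (Nat.succ_ne_zero j)
    linarith
  rw [hrefl] at keyQ
  rw [gaussBinom, eq_div_iff hB0]
  apply mul_left_cancel₀ hQ0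
  rw [← keyQ]
  ring

lemma card_nontrivial_proper (q m : ℕ) (hq : Fintype.card F = q) (hm : finrank F V = m) :
    (Nat.card {U : Submodule F V // U ≠ ⊥ ∧ U ≠ ⊤} : ℚ) =
      ∑ i ∈ Icc 1 (m - 1), gaussBinom q m i := by
  have : Finite V := Module.finite_of_finite F
  have : Finite (Submodule F V) := myFinSub
  classical
  rw [Nat.card_eq_fintype_card, Fintype.card_subtype]
  have hfib : (univ.filter fun U : Submodule F V => U ≠ ⊥ ∧ U ≠ ⊤).card =
      ∑ i ∈ Icc 1 (m - 1), ((univ.filter fun U : Submodule F V => U ≠ ⊥ ∧ U ≠ ⊤).filter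
        fun U : Submodule F V => finrank F U = i).card := by
    refine Finset.card_eq_sum_card_fiberwise fun U hU => ?_
    rw [Finset.mem_coe, mem_filter] at hU
    obtain ⟨-, hUb, hUt⟩ := hU
    have h1 : finrank F U ≠ 0 := fun h => hUb (Submodule.finrank_eq_zero.mp h)
    have h2 : finrank F U < m := hm ▸ Submodule.finrank_lt hUt
    rw [Finset.mem_coe, mem_Icc]
    omega
  rw [hfib, Nat.cast_sum]
  refine Finset.sum_congr rfl fun i hi => ?_
  rw [mem_Icc] at hi
  have him : i ≤ m := le_trans hi.2 (Nat.sub_le m 1)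
  have hfilter : ((univ.filter fun U : Submodule F V => U ≠ ⊥ ∧ U ≠ ⊤).filter
      fun U : Submodule F V => finrank F U = i) =
      univ.filter fun U : Submodule F V => finrank F U = i := by
    rw [Finset.filter_filter]
    refine Finset.filter_congr fun U _ => ?_
    constructor
    · exact fun h => h.2
    · intro h
      refine ⟨⟨fun hb => ?_, fun ht => ?_⟩, h⟩
      · rw [hb, finrank_bot] at h; omega
      · rw [ht, finrank_top, hm] at h; omega
  rw [hfilter, ← Fintype.card_subtype, ← Nat.card_eq_fintype_card]
  exact card_dim_eq_gauss q m i hq hm him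

/-- Subspaces strictly below `W` (and nonzero) correspond to nontrivial proper
subspaces of `W`. -/
noncomputable def equivBelow (W : Submodule F V) :
    {U : Submodule F V // U < W ∧ U ≠ ⊥} ≃ {U' : Submodule F W // U' ≠ ⊥ ∧ U' ≠ ⊤} where
  toFun U := ⟨Submodule.comap W.subtype U.1, by
      have hmc : Submodule.map W.subtype (Submodule.comap W.subtype U.1) = U.1 := by
        rw [Submodule.map_comap_subtype]; exact inf_eq_right.mpr U.2.1.le
      constructor
      · intro h
        rw [h, Submodule.map_bot] at hmc
        exact U.2.2 hmc.symm
      · intro h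
        rw [h, Submodule.map_subtype_top] at hmc
        exact U.2.1.ne' hmc⟩
  invFun U' := ⟨Submodule.map W.subtype U'.1, by
      have hcm : Submodule.comap W.subtype (Submodule.map W.subtype U'.1) = U'.1 := by
        rw [Submodule.comap_map_eq, Submodule.ker_subtype, sup_bot_eq]
      constructor
      · refine lt_of_le_of_ne (Submodule.map_subtype_le W U'.1) fun h => ?_
        rw [h, Submodule.comap_subtype_self] at hcm
        exact U'.2.2 hcm.symm
      · intro h
        rw [h, Submodule.comap_bot, Submodule.ker_subtype] at hcm
        exact U'.2.1 hcm.symm⟩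
  left_inv U := Subtype.ext (by
    show Submodule.map W.subtype (Submodule.comap W.subtype U.1) = U.1
    rw [Submodule.map_comap_subtype]; exact inf_eq_right.mpr U.2.1.le)
  right_inv U' := Subtype.ext (by
    show Submodule.comap W.subtype (Submodule.map W.subtype U'.1) = U'.1
    rw [Submodule.comap_map_eq, Submodule.ker_subtype, sup_bot_eq])

omit [Fintype F] [FiniteDimensional F V] in
lemma map_mkQ_self (W : Submodule F V) : Submodule.map W.mkQ W = ⊥ :=
  le_bot_iff.mp (Submodule.map_le_iff_le_comap.mpr
    (by rw [Submodule.comap_bot, Submodule.ker_mkQ]))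

/-- Subspaces strictly above `W` (and proper) correspond to nontrivial proper
subspaces of `V ⧸ W`. -/
noncomputable def equivAbove (W : Submodule F V) :
    {U : Submodule F V // W < U ∧ U ≠ ⊤} ≃ {U' : Submodule F (V ⧸ W) // U' ≠ ⊥ ∧ U' ≠ ⊤} where
  toFun U := ⟨Submodule.map W.mkQ U.1, by
      have hcm : Submodule.comap W.mkQ (Submodule.map W.mkQ U.1) = U.1 := by
        rw [Submodule.comap_map_mkQ]; exact sup_eq_right.mpr U.2.1.le
      constructor
      · intro h
        rw [h, Submodule.comap_bot, Submodule.ker_mkQ] at hcm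
        exact U.2.1.ne' hcm.symm
      · intro h
        rw [h, Submodule.comap_top] at hcm
        exact U.2.2 hcm.symm⟩
  invFun U' := ⟨Submodule.comap W.mkQ U'.1, by
      have hmc : Submodule.map W.mkQ (Submodule.comap W.mkQ U'.1) = U'.1 := by
        rw [Submodule.map_comap_eq, Submodule.range_mkQ, top_inf_eq]
      constructor
      · refine lt_of_le_of_ne ?_ fun h => ?_
        · have h0 : Submodule.comap W.mkQ ⊥ ≤ Submodule.comap W.mkQ U'.1 :=
            Submodule.comap_mono bot_le
          rwa [Submodule.comap_bot, Submodule.ker_mkQ] at h0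
        · rw [← h, map_mkQ_self] at hmc
          exact U'.2.1 hmc.symm
      · intro h
        rw [h, Submodule.map_top, Submodule.range_mkQ] at hmc
        exact U'.2.2 hmc.symm⟩
  left_inv U := Subtype.ext (by
    show Submodule.comap W.mkQ (Submodule.map W.mkQ U.1) = U.1
    rw [Submodule.comap_map_mkQ]; exact sup_eq_right.mpr U.2.1.le)
  right_inv U' := Subtype.ext (by
    show Submodule.map W.mkQ (Submodule.comap W.mkQ U'.1) = U'.1
    rw [Submodule.map_comap_eq, Submodule.range_mkQ, top_inf_eq])

end Counting

/-- Degree formula in `In(V)` for a `k`-dimensional subspace `W` of an `n`-dimensional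
vector space over the field with `q` elements. -/
theorem inclGraph_degree_formula
    (F V : Type*) [Field F] [Fintype F] [AddCommGroup V] [Module F V] [FiniteDimensional F V]
    (q n k : ℕ) (hq : Fintype.card F = q) (hn : Module.finrank F V = n) (h2 : 2 ≤ n)
    (W : Submodule F V) (hW : Module.finrank F W = k) (hk1 : 1 ≤ k) (hk2 : k ≤ n - 1) :
    (inDegree F W : ℚ) =
      (∑ i ∈ Finset.Icc 1 (k - 1), gaussBinom q k i) +
      (∑ i ∈ Finset.Icc 1 (n - k - 1), gaussBinom q (n - k) i) := by
  classical
  have : Finite V := Module.finite_of_finite F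
  have : Finite (Submodule F V) := myFinSub
  have hsplit : ∀ U : Submodule F V,
      ((U ≠ ⊥ ∧ U ≠ ⊤) ∧ (U < W ∨ W < U)) ↔ ((U < W ∧ U ≠ ⊥) ∨ (W < U ∧ U ≠ ⊤)) := by
    intro U
    constructor
    · rintro ⟨⟨hb, ht⟩, h | h⟩
      · exact Or.inl ⟨h, hb⟩
      · exact Or.inr ⟨h, ht⟩
    · rintro (⟨h, hb⟩ | ⟨h, ht⟩)
      · exact ⟨⟨hb, (lt_of_lt_of_le h le_top).ne⟩, Or.inl h⟩
      · exact ⟨⟨(lt_of_le_of_lt bot_le h).ne', ht⟩, Or.inr h⟩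
  have hdisj : Disjoint (fun U : Submodule F V => U < W ∧ U ≠ ⊥)
      (fun U : Submodule F V => W < U ∧ U ≠ ⊤) := by
    rw [Pi.disjoint_iff]
    intro U
    simp only [Prop.disjoint_iff]
    intro ⟨⟨h1, _⟩, ⟨h2', _⟩⟩
    exact absurd (h1.trans h2') (lt_irrefl U)
  have hdeg : inDegree F W = Nat.card {U : Submodule F V // U < W ∧ U ≠ ⊥} +
      Nat.card {U : Submodule F V // W < U ∧ U ≠ ⊤} := by
    rw [inDegree, Nat.card_congr (Equiv.subtypeEquivRight hsplit),
      Nat.card_congr (subtypeOrEquiv _ _ hdisj), Nat.card_sum]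
  have hquot : finrank F (V ⧸ W) = n - k := by
    have := W.finrank_quotient_add_finrank
    omega
  rw [hdeg, Nat.cast_add, Nat.card_congr (equivBelow W), Nat.card_congr (equivAbove W),
    card_nontrivial_proper q k hq hW, card_nontrivial_proper q (n - k) hq hquot]
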